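/- Let E be a complete random normed module with full support, f ∈ 𝒞(E), and h_{u,α}(x) = u(x) + α an L⁰-affine function with u ∈ E*, α ∈ L⁰(F). If f ≤ h_{u,α} pointwise, then f = h_{u,β} for some β ∈ L⁰(F) with β ≤ α. -/

import Mathlib

open MeasureTheory Filter Topology ENNReal
open scoped Classical

namespace RandomNormed

variable {Ω : Type*} [MeasurableSpace Ω] {μ : Measure Ω}

/-! `Ω →ₘ[μ] ℝ` is our model of `L⁰(F)`: equivalence classes of real random variables.
We equip it with its (pointwise a.e.) commutative ring structure. -/

noncomputable instance : NatCast (Ω →ₘ[μ] ℝ) := ⟨fun n => AEEqFun.const Ω (n : ℝ)⟩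
noncomputable instance : IntCast (Ω →ₘ[μ] ℝ) := ⟨fun n => AEEqFun.const Ω (n : ℝ)⟩

theorem natCast_toGerm (n : ℕ) : ((n : Ω →ₘ[μ] ℝ)).toGerm = n := by
  show (AEEqFun.const Ω (n:ℝ)).toGerm = _
  rw [AEEqFun.const, AEEqFun.mk_toGerm]; rfl

theorem intCast_toGerm (n : ℤ) : ((n : Ω →ₘ[μ] ℝ)).toGerm = n := by
  show (AEEqFun.const Ω (n:ℝ)).toGerm = _
  rw [AEEqFun.const, AEEqFun.mk_toGerm]; rfl

noncomputable instance : CommRing (Ω →ₘ[μ] ℝ) :=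
  AEEqFun.toGerm_injective.commRing AEEqFun.toGerm AEEqFun.zero_toGerm AEEqFun.one_toGerm
    AEEqFun.add_toGerm AEEqFun.mul_toGerm AEEqFun.neg_toGerm AEEqFun.sub_toGerm
    (fun _ _ => AEEqFun.smul_toGerm _ _) (fun _ _ => AEEqFun.smul_toGerm _ _)
    AEEqFun.pow_toGerm natCast_toGerm intCast_toGerm

/-- The Ky Fan functional `ξ ↦ ∫ (|ξ| ∧ 1) dμ`: it metrizes the `(ε,λ)`-topology, i.e. the
topology of convergence in probability, on `L⁰(F) = Ω →ₘ[μ] ℝ`. -/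
noncomputable def dP (μ : Measure Ω) (ξ : Ω →ₘ[μ] ℝ) : ℝ≥0∞ :=
  ∫⁻ ω, ENNReal.ofReal (min |ξ ω| 1) ∂μ

section RN

variable {E : Type*} [AddCommGroup E] [Module (Ω →ₘ[μ] ℝ) E]

/-- `nrm` is an `L⁰`-norm on the `L⁰(F)`-module `E`. -/
def IsRNNorm (nrm : E → Ω →ₘ[μ] ℝ) : Prop :=
  (∀ x, 0 ≤ nrm x) ∧ (∀ (ξ : Ω →ₘ[μ] ℝ) (x : E), nrm (ξ • x) = |ξ| * nrm x) ∧
    (∀ x y, nrm (x + y) ≤ nrm x + nrm y) ∧ (∀ x, nrm x = 0 → x = 0)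

/-- Completeness of the random normed module `(E, nrm)` with respect to the
`(ε,λ)`-topology: every Cauchy (in probability) sequence converges in probability. -/
def IsCompleteRN (nrm : E → Ω →ₘ[μ] ℝ) : Prop :=
  ∀ x : ℕ → E,
    (∀ ε : ℝ≥0∞, 0 < ε → ∃ N, ∀ m, N ≤ m → ∀ n, N ≤ n → dP μ (nrm (x m - x n)) < ε) →
    ∃ l : E, Tendsto (fun n => dP μ (nrm (x n - l))) atTop (nhds 0)

/-- The random normed module `(E, nrm)` has full support: on no set of positive measure
do all the norms vanish. -/
def HasFullSupport (nrm : E → Ω →ₘ[μ] ℝ) : Prop :=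
  ∀ A : Set Ω, MeasurableSet A → μ A ≠ 0 → ∃ x : E, ¬ (∀ᵐ ω ∂μ, ω ∈ A → nrm x ω = 0)

/-- An `L⁰`-linear functional is a.s. bounded (equivalently, continuous), i.e. a member of
the random conjugate space `E*`. -/
def IsBoundedLF (nrm : E → Ω →ₘ[μ] ℝ) (u : E →ₗ[Ω →ₘ[μ] ℝ] (Ω →ₘ[μ] ℝ)) : Prop :=
  ∃ ξ : Ω →ₘ[μ] ℝ, 0 ≤ ξ ∧ ∀ x, |u x| ≤ ξ * nrm x

/-- `s` is the supremum in `L̄⁰(F)` (with the a.e. order) of the set `S` of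
(representatives of) extended-real-valued random variables. -/
def IsAESup (μ : Measure Ω) (S : Set (Ω → EReal)) (s : Ω → EReal) : Prop :=
  (∀ g ∈ S, ∀ᵐ ω ∂μ, g ω ≤ s ω) ∧
    ∀ b : Ω → EReal, AEMeasurable b μ → (∀ g ∈ S, ∀ᵐ ω ∂μ, g ω ≤ b ω) →
      ∀ᵐ ω ∂μ, s ω ≤ b ω

/-- `f : E → L̄⁰(F)` (in representative form) is a proper lower semicontinuous `L⁰`-convex
function: a.e.-measurable values, nowhere `-∞`, somewhere finite, `L⁰`-convex, and with
an epigraph that is (sequentially) closed in the `(ε,λ)`-topology of `E × L⁰(F)`. -/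
def IsCvxFn (nrm : E → Ω →ₘ[μ] ℝ) (f : E → Ω → EReal) : Prop :=
  (∀ x, AEMeasurable (f x) μ) ∧
  (∀ x, ∀ᵐ ω ∂μ, ⊥ < f x ω) ∧
  (∃ x, ∀ᵐ ω ∂μ, f x ω < ⊤) ∧
  (∀ ξ : Ω →ₘ[μ] ℝ, 0 ≤ ξ → ξ ≤ 1 → ∀ x y : E,
    ∀ᵐ ω ∂μ, f (ξ • x + (1 - ξ) • y) ω ≤
      ((ξ ω : ℝ) : EReal) * f x ω + (((1 - ξ : Ω →ₘ[μ] ℝ) ω : ℝ) : EReal) * f y ω) ∧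
  (∀ (x : ℕ → E) (r : ℕ → Ω →ₘ[μ] ℝ) (x₀ : E) (r₀ : Ω →ₘ[μ] ℝ),
    (∀ n, ∀ᵐ ω ∂μ, f (x n) ω ≤ ((r n ω : ℝ) : EReal)) →
    Tendsto (fun n => dP μ (nrm (x n - x₀))) atTop (nhds 0) →
    Tendsto (fun n => dP μ (r n - r₀)) atTop (nhds 0) →
    ∀ᵐ ω ∂μ, f x₀ ω ≤ ((r₀ ω : ℝ) : EReal))

/-- The class `𝒞(E)` of proper lower semicontinuous `L⁰`-convex functions on `E`. -/
def CvxFn (nrm : E → Ω →ₘ[μ] ℝ) := {f : E → Ω → EReal // IsCvxFn nrm f}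

/-- The pointwise a.e. order on functions `E → L̄⁰(F)`. -/
def CleFn (μ : Measure Ω) (f g : E → Ω → EReal) : Prop := ∀ x : E, ∀ᵐ ω ∂μ, f x ω ≤ g x ω

/-- Pointwise a.e. equality of functions `E → L̄⁰(F)` (i.e. equality in `L̄⁰`). -/
def CeqFn (μ : Measure Ω) (f g : E → Ω → EReal) : Prop := ∀ x : E, ∀ᵐ ω ∂μ, f x ω = g x ω

/-- `T` is a stable operator on `𝒞(E)`: `T(Ĩ_A f + Ĩ_{A^c} g) = Ĩ_A T(f) + Ĩ_{A^c} T(g)`. -/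
def IsStableOp (nrm : E → Ω →ₘ[μ] ℝ) (T : CvxFn nrm → CvxFn nrm) : Prop :=
  ∀ A : Set Ω, MeasurableSet A → ∀ f g h : CvxFn nrm,
    (∀ x : E, ∀ᵐ ω ∂μ, h.1 x ω = if ω ∈ A then f.1 x ω else g.1 x ω) →
    (∀ x : E, ∀ᵐ ω ∂μ, (T h).1 x ω = if ω ∈ A then (T f).1 x ω else (T g).1 x ω)

/-- `T : 𝒞(E) → 𝒞(E)` is fully order preserving: `f ≤ g ↔ T f ≤ T g`, and `T` is onto
(up to equality in `L̄⁰`, i.e. pointwise a.e. equality). -/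
def IsFullyOrderPreserving (nrm : E → Ω →ₘ[μ] ℝ)
    (T : CvxFn nrm → CvxFn nrm) : Prop :=
  (∀ f g : CvxFn nrm, CleFn μ f.1 g.1 ↔ CleFn μ (T f).1 (T g).1) ∧
    ∀ g : CvxFn nrm, ∃ f : CvxFn nrm, CeqFn μ (T f).1 g.1

end RN

section Aux

theorem const_mul' (a b : ℝ) :
    (AEEqFun.const Ω a : Ω →ₘ[μ] ℝ) * AEEqFun.const Ω b = AEEqFun.const Ω (a * b) := by
  simp only [AEEqFun.const, AEEqFun.mk_mul_mk]
  rfl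

theorem const_add' (a b : ℝ) :
    (AEEqFun.const Ω a : Ω →ₘ[μ] ℝ) + AEEqFun.const Ω b = AEEqFun.const Ω (a + b) := by
  simp only [AEEqFun.const, AEEqFun.mk_add_mk]
  rfl

theorem one_sub_const' (b : ℝ) :
    (1 : Ω →ₘ[μ] ℝ) - AEEqFun.const Ω b = AEEqFun.const Ω (1 - b) := by
  apply AEEqFun.toGerm_injective
  rw [AEEqFun.sub_toGerm, AEEqFun.one_toGerm]
  simp only [AEEqFun.const, AEEqFun.mk_toGerm]
  rfl

theorem const_zero' : (AEEqFun.const Ω (0:ℝ) : Ω →ₘ[μ] ℝ) = 0 := by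
  apply AEEqFun.toGerm_injective
  rw [AEEqFun.zero_toGerm]
  simp only [AEEqFun.const, AEEqFun.mk_toGerm]
  rfl

theorem const_one' : (AEEqFun.const Ω (1:ℝ) : Ω →ₘ[μ] ℝ) = 1 := by
  apply AEEqFun.toGerm_injective
  rw [AEEqFun.one_toGerm]
  simp only [AEEqFun.const, AEEqFun.mk_toGerm]
  rfl

end Aux

/-- If `f ∈ 𝒞(E)` lies below the `L⁰`-affine function `h_{u,α} = u(·) + α`, then `f` is
itself `L⁰`-affine: `f = h_{u,β}` for some `β ≤ α`. -/
theorem below_affine_is_affine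
    {Ω : Type*} [MeasurableSpace Ω] {μ : Measure Ω} [IsProbabilityMeasure μ]
    {E : Type*} [AddCommGroup E] [Module (Ω →ₘ[μ] ℝ) E]
    (nrm : E → Ω →ₘ[μ] ℝ) (hnrm : IsRNNorm nrm)
    (hcomplete : IsCompleteRN nrm) (hfull : HasFullSupport nrm)
    (f : E → Ω → EReal) (hf : IsCvxFn nrm f)
    (u : E →ₗ[Ω →ₘ[μ] ℝ] (Ω →ₘ[μ] ℝ)) (hu : IsBoundedLF nrm u) (α : Ω →ₘ[μ] ℝ)
    (hle : ∀ x : E, ∀ᵐ ω ∂μ, f x ω ≤ (((u x + α) ω : ℝ) : EReal)) :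
    ∃ β : Ω →ₘ[μ] ℝ, β ≤ α ∧
      ∀ x : E, ∀ᵐ ω ∂μ, f x ω = (((u x + β) ω : ℝ) : EReal) := by
  obtain ⟨hmeas, hbot, -, hconv, -⟩ := hf
  have hβm : AEStronglyMeasurable (fun ω => (f 0 ω).toReal) μ :=
    (measurable_ereal_toReal.comp_aemeasurable (hmeas 0)).aestronglyMeasurable
  set β : Ω →ₘ[μ] ℝ := AEEqFun.mk _ hβm with hβdef
  have hβc : ⇑β =ᵐ[μ] fun ω => (f 0 ω).toReal := AEEqFun.coeFn_mk _ hβm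
  have hα0 : ∀ᵐ ω ∂μ, f 0 ω ≤ ((α ω : ℝ) : EReal) := by
    have h := hle 0
    rw [map_zero, zero_add] at h
    exact h
  refine ⟨β, ?_, ?_⟩
  · rw [← AEEqFun.coeFn_le]
    filter_upwards [hβc, hα0, hbot 0] with ω h1 h2 h3
    rw [h1]
    have hne : f 0 ω ≠ ⊤ := ne_top_of_le_ne_top (EReal.coe_ne_top _) h2
    have := EReal.coe_toReal hne h3.ne'
    exact EReal.coe_le_coe_iff.mp (by rw [this]; exact h2)
  · intro x
    set c : ℕ → ℝ := fun n => (n : ℝ) + 1 with hc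
    have hcpos : ∀ n, (0:ℝ) < c n := fun n => by
      simp only [hc]; positivity
    have hcne : ∀ n, c n ≠ 0 := fun n => (hcpos n).ne'
    set ξ : ℕ → (Ω →ₘ[μ] ℝ) := fun n => AEEqFun.const Ω (c n)⁻¹ with hξdef
    set y : ℕ → E := fun n => (AEEqFun.const Ω (c n) : Ω →ₘ[μ] ℝ) • x with hydef
    set z : ℕ → E := fun n => (AEEqFun.const Ω (1 - c n) : Ω →ₘ[μ] ℝ) • x with hzdef
    have hξ0 : ∀ n, (0 : Ω →ₘ[μ] ℝ) ≤ ξ n := by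
      intro n
      rw [← AEEqFun.coeFn_le]
      filter_upwards [AEEqFun.coeFn_zero (β := ℝ) (μ := μ),
        AEEqFun.coeFn_const Ω (c n)⁻¹] with ω h1 h2
      simp only [hξdef]
      rw [h2, h1]
      simp only [Pi.zero_apply, Function.const_apply]
      positivity
    have hξ1 : ∀ n, ξ n ≤ (1 : Ω →ₘ[μ] ℝ) := by
      intro n
      rw [← AEEqFun.coeFn_le]
      filter_upwards [AEEqFun.coeFn_one (β := ℝ) (μ := μ),
        AEEqFun.coeFn_const Ω (c n)⁻¹] with ω h1 h2
      simp only [hξdef]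
      rw [h2, h1]
      simp only [Pi.one_apply, Function.const_apply]
      have h1n : (1:ℝ) ≤ c n := by simp only [hc]; linarith [Nat.cast_nonneg (α := ℝ) n]
      have hd0 : (0:ℝ) ≤ (c n)⁻¹ := by positivity
      have hdc : (c n)⁻¹ * c n = 1 := inv_mul_cancel₀ (hcne n)
      have := mul_le_mul_of_nonneg_left h1n hd0
      linarith
    have key1 : ∀ n, ξ n • y n + (1 - ξ n) • (0:E) = x := by
      intro n
      rw [smul_zero, add_zero]
      simp only [hξdef, hydef]
      rw [smul_smul, const_mul', inv_mul_cancel₀ (hcne n), const_one', one_smul]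
    have key2 : ∀ n, ξ n • z n + (1 - ξ n) • x = (0:E) := by
      intro n
      simp only [hξdef, hzdef]
      rw [one_sub_const', smul_smul, const_mul', ← add_smul, const_add']
      have : (c n)⁻¹ * (1 - c n) + (1 - (c n)⁻¹) = 0 := by
        rw [mul_sub, mul_one, inv_mul_cancel₀ (hcne n)]; ring
      rw [this, const_zero', zero_smul]
    -- coefficient coeFn facts
    have eξ : ∀ n, ⇑(ξ n) =ᵐ[μ] fun _ => (c n)⁻¹ := fun n => by
      simp only [hξdef]; exact AEEqFun.coeFn_const Ω _
    have eξ' : ∀ n, ⇑(1 - ξ n) =ᵐ[μ] fun _ => 1 - (c n)⁻¹ := fun n => by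
      simp only [hξdef]
      rw [one_sub_const']
      exact AEEqFun.coeFn_const Ω _
    -- the two convexity inequalities, pointwise a.e.
    have hA : ∀ n, ∀ᵐ ω ∂μ, f x ω ≤
        (((c n)⁻¹ : ℝ) : EReal) * f (y n) ω + ((1 - (c n)⁻¹ : ℝ) : EReal) * f 0 ω := by
      intro n
      have h := hconv (ξ n) (hξ0 n) (hξ1 n) (y n) 0
      simp only [key1 n] at h
      filter_upwards [h, eξ n, eξ' n] with ω h1 h2 h3
      rw [h2, h3] at h1
      exact h1
    have hB : ∀ n, ∀ᵐ ω ∂μ, f 0 ω ≤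
        (((c n)⁻¹ : ℝ) : EReal) * f (z n) ω + ((1 - (c n)⁻¹ : ℝ) : EReal) * f x ω := by
      intro n
      have h := hconv (ξ n) (hξ0 n) (hξ1 n) (z n) x
      simp only [key2 n] at h
      filter_upwards [h, eξ n, eξ' n] with ω h1 h2 h3
      rw [h2, h3] at h1
      exact h1
    -- upper bounds from `hle`
    have hAy : ∀ n, ∀ᵐ ω ∂μ, f (y n) ω ≤ ((c n * (u x) ω + α ω : ℝ) : EReal) := by
      intro n
      have hU : u (y n) = AEEqFun.const Ω (c n) * u x := by
        simp only [hydef]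
        rw [LinearMap.map_smul, smul_eq_mul]
      have h := hle (y n)
      rw [hU] at h
      filter_upwards [h, AEEqFun.coeFn_add (AEEqFun.const Ω (c n) * u x) α,
        AEEqFun.coeFn_mul (AEEqFun.const Ω (c n)) (u x),
        AEEqFun.coeFn_const Ω (c n)] with ω h1 h2 h3 h4
      simp only [Pi.add_apply, Pi.mul_apply] at h2 h3
      rw [h2, h3, h4] at h1
      exact h1
    have hAz : ∀ n, ∀ᵐ ω ∂μ, f (z n) ω ≤ (((1 - c n) * (u x) ω + α ω : ℝ) : EReal) := by
      intro n
      have hU : u (z n) = AEEqFun.const Ω (1 - c n) * u x := by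
        simp only [hzdef]
        rw [LinearMap.map_smul, smul_eq_mul]
      have h := hle (z n)
      rw [hU] at h
      filter_upwards [h, AEEqFun.coeFn_add (AEEqFun.const Ω (1 - c n) * u x) α,
        AEEqFun.coeFn_mul (AEEqFun.const Ω (1 - c n)) (u x),
        AEEqFun.coeFn_const Ω (1 - c n)] with ω h1 h2 h3 h4
      simp only [Pi.add_apply, Pi.mul_apply] at h2 h3
      rw [h2, h3, h4] at h1
      exact h1
    have hlex : ∀ᵐ ω ∂μ, f x ω ≤ (((u x) ω + α ω : ℝ) : EReal) := by
      filter_upwards [hle x, AEEqFun.coeFn_add (u x) α] with ω h1 h2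
      simp only [Pi.add_apply] at h2
      rw [h2] at h1
      exact h1
    have e6 : ⇑(u x + β) =ᵐ[μ] fun ω => (u x) ω + (f 0 ω).toReal := by
      filter_upwards [AEEqFun.coeFn_add (u x) β, hβc] with ω h1 h2
      simp only [Pi.add_apply] at h1
      rw [h1, h2]
    -- assemble all countably many a.e. statements
    have hAll : ∀ᵐ ω ∂μ, ∀ n : ℕ,
        (f x ω ≤ (((c n)⁻¹ : ℝ) : EReal) * f (y n) ω + ((1 - (c n)⁻¹ : ℝ) : EReal) * f 0 ω) ∧
        (f 0 ω ≤ (((c n)⁻¹ : ℝ) : EReal) * f (z n) ω + ((1 - (c n)⁻¹ : ℝ) : EReal) * f x ω) ∧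
        (f (y n) ω ≤ ((c n * (u x) ω + α ω : ℝ) : EReal)) ∧
        (f (z n) ω ≤ (((1 - c n) * (u x) ω + α ω : ℝ) : EReal)) ∧
        (⊥ < f (y n) ω) ∧ (⊥ < f (z n) ω) := by
      rw [ae_all_iff]
      intro n
      filter_upwards [hA n, hB n, hAy n, hAz n, hbot (y n), hbot (z n)] with
        ω h1 h2 h3 h4 h5 h6
      exact ⟨h1, h2, h3, h4, h5, h6⟩
    filter_upwards [hAll, hlex, hbot x, hbot 0, hα0, e6] with ω hn hx hbx hb0 h0 h6
    -- pointwise real computation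
    set U : ℝ := (u x) ω with hU
    set A : ℝ := α ω with hA'
    have hfx : f x ω = ((f x ω).toReal : EReal) :=
      (EReal.coe_toReal (ne_top_of_le_ne_top (EReal.coe_ne_top _) hx) hbx.ne').symm
    have hf0 : f 0 ω = ((f 0 ω).toReal : EReal) :=
      (EReal.coe_toReal (ne_top_of_le_ne_top (EReal.coe_ne_top _) h0) hb0.ne').symm
    set F : ℝ := (f x ω).toReal with hF
    set F0 : ℝ := (f 0 ω).toReal with hF0
    have rA : ∀ n, F - U - F0 ≤ (c n)⁻¹ * (A - F0) := by
      intro n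
      obtain ⟨h1, -, h3, -, h5, -⟩ := hn n
      have hfy : f (y n) ω = ((f (y n) ω).toReal : EReal) :=
        (EReal.coe_toReal (ne_top_of_le_ne_top (EReal.coe_ne_top _) h3) h5.ne').symm
      set G : ℝ := (f (y n) ω).toReal with hG
      rw [hfx, hf0, hfy] at h1
      rw [hfy] at h3
      have h1' : F ≤ (c n)⁻¹ * G + (1 - (c n)⁻¹) * F0 := by exact_mod_cast h1
      have h3' : G ≤ c n * U + A := by exact_mod_cast h3
      have hd0 : (0:ℝ) ≤ (c n)⁻¹ := by positivity
      have hdc : (c n)⁻¹ * c n = 1 := inv_mul_cancel₀ (hcne n)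
      have h5' : (c n)⁻¹ * G ≤ (c n)⁻¹ * (c n * U + A) :=
        mul_le_mul_of_nonneg_left h3' hd0
      have hexp : (c n)⁻¹ * (c n * U + A) = U + (c n)⁻¹ * A := by
        rw [mul_add, ← mul_assoc, hdc, one_mul]
      rw [hexp] at h5'
      nlinarith [h1', h5']
    have rB : ∀ n, F0 + U - F ≤ (c n)⁻¹ * (U + A - F) := by
      intro n
      obtain ⟨-, h2, -, h4, -, h6'⟩ := hn n
      have hfz : f (z n) ω = ((f (z n) ω).toReal : EReal) :=
        (EReal.coe_toReal (ne_top_of_le_ne_top (EReal.coe_ne_top _) h4) h6'.ne').symm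
      set H : ℝ := (f (z n) ω).toReal with hH
      rw [hfx, hf0, hfz] at h2
      rw [hfz] at h4
      have h2' : F0 ≤ (c n)⁻¹ * H + (1 - (c n)⁻¹) * F := by exact_mod_cast h2
      have h4' : H ≤ (1 - c n) * U + A := by exact_mod_cast h4
      have hd0 : (0:ℝ) ≤ (c n)⁻¹ := by positivity
      have hdc : (c n)⁻¹ * c n = 1 := inv_mul_cancel₀ (hcne n)
      have h5' : (c n)⁻¹ * H ≤ (c n)⁻¹ * ((1 - c n) * U + A) :=
        mul_le_mul_of_nonneg_left h4' hd0
      have hexp : (c n)⁻¹ * ((1 - c n) * U + A) = (c n)⁻¹ * U - U + (c n)⁻¹ * A := by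
        have hcn := hcne n
        field_simp
      rw [hexp] at h5'
      nlinarith [h2', h5']
    have tA : Tendsto (fun n : ℕ => (c n)⁻¹ * (A - F0)) atTop (𝓝 0) := by
      have h := tendsto_one_div_add_atTop_nhds_zero_nat.mul_const (A - F0)
      rw [zero_mul] at h
      simpa [hc, one_div] using h
    have tB : Tendsto (fun n : ℕ => (c n)⁻¹ * (U + A - F)) atTop (𝓝 0) := by
      have h := tendsto_one_div_add_atTop_nhds_zero_nat.mul_const (U + A - F)
      rw [zero_mul] at h
      simpa [hc, one_div] using h
    have lim1 : F - U - F0 ≤ 0 := ge_of_tendsto' tA rA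
    have lim2 : F0 + U - F ≤ 0 := ge_of_tendsto' tB rB
    have hFeq : F = U + F0 := by linarith
    rw [h6, hfx]
    exact_mod_cast hFeq

end RandomNormed
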